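/- (Positive invariance, Lemma 1.) Let (x_S, x_I, x_R) be a solution of the controlled SIRI dynamics on [0, T] whose initial condition satisfies x_S(0) ≥ 0, x_I(0) ≥ 0, x_R(0) ≥ 0 and x_S(0) + x_I(0) + x_R(0) = 1. Then for every t ∈ [0, T], the values satisfy x_S(t) ∈ [0, 1], x_I(t) ∈ [0, 1], x_R(t) ∈ [0, 1], and x_S(t) + x_I(t) + x_R(t) = 1. -/

import Mathlib

open MeasureTheory Set

open intervalIntegral in

lemma gronwall_zero {a b M : ℝ} (hM : 0 ≤ M) {f : ℝ → ℝ}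
    (hf : Continuous f)
    (h : ∀ t ∈ Icc a b, |f t| ≤ M * ∫ s in a..t, |f s|) :
    ∀ t ∈ Icc a b, f t = 0 := by
  set w : ℝ → ℝ := fun t => ∫ s in a..t, |f s| with hw
  have hfabs : Continuous fun s => |f s| := hf.abs
  have hwderiv : ∀ t : ℝ, HasDerivAt w (|f t|) t := fun t =>
    integral_hasDerivAt_right (hfabs.intervalIntegrable a t)
      (hfabs.stronglyMeasurableAtFilter _ _) hfabs.continuousAt
  have hwcont : Continuous w := by
    apply continuous_iff_continuousAt.2 fun t => (hwderiv t).continuousAt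
  have hwnn : ∀ t ∈ Icc a b, 0 ≤ w t := fun t ht =>
    intervalIntegral.integral_nonneg ht.1 (fun s _ => abs_nonneg _)
  have key : ∀ t ∈ Icc a b, ‖w t‖ ≤ gronwallBound 0 M 0 (t - a) := by
    apply norm_le_gronwallBound_of_norm_deriv_right_le hwcont.continuousOn
      (fun t _ => (hwderiv t).hasDerivWithinAt)
    · simp [hw, Real.norm_eq_abs]
    · intro t ht
      have h1 := h t (Ico_subset_Icc_self ht)
      rw [Real.norm_eq_abs, Real.norm_eq_abs, abs_abs,
        abs_of_nonneg (hwnn t (Ico_subset_Icc_self ht))]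
      simpa using h1
  intro t ht
  have hw0 : w t = 0 := by
    have := key t ht
    rw [gronwallBound_ε0_δ0] at this
    have := (abs_nonneg (w t)).antisymm (by simpa [Real.norm_eq_abs] using this)
    exact abs_eq_zero.1 this.symm
  have : |f t| ≤ 0 := by
    have h2 := h t ht
    calc |f t| ≤ M * w t := h2
    _ = 0 := by rw [hw0, mul_zero]
  exact abs_eq_zero.1 ((abs_nonneg _).antisymm this).symm

lemma nonneg_aux {T M : ℝ} (hM : 0 ≤ M) {y g : ℝ → ℝ}
    (hy : Continuous y) (hy0 : 0 ≤ y 0)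
    (hInt : ∀ c ∈ Icc (0:ℝ) T, ∀ d ∈ Icc (0:ℝ) T, IntervalIntegrable g volume c d)
    (hbd : ∀ᵐ s ∂(volume.restrict (Icc (0:ℝ) T)), -(g s) ≤ M * |y s|)
    (heq : ∀ t ∈ Icc (0:ℝ) T, y t = y 0 + ∫ s in (0:ℝ)..t, g s) :
    ∀ t ∈ Icc (0:ℝ) T, 0 ≤ y t := by
  by_contra hcon
  push_neg at hcon
  obtain ⟨t1, ht1, ht1neg⟩ := hcon
  set S : Set ℝ := Icc 0 t1 ∩ {t | 0 ≤ y t} with hS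
  have h0S : (0:ℝ) ∈ S := ⟨⟨le_refl 0, ht1.1⟩, hy0⟩
  have hSc : IsClosed S := isClosed_Icc.inter (isClosed_le continuous_const hy)
  have hbdd : BddAbove S := ⟨t1, fun x hx => hx.1.2⟩
  set t0 : ℝ := sSup S with ht0def
  have ht0S : t0 ∈ S := hSc.csSup_mem ⟨0, h0S⟩ hbdd
  have ht0 : t0 ∈ Icc 0 t1 := ht0S.1
  have ht0T : t0 ∈ Icc 0 T := ⟨ht0.1, ht0.2.trans ht1.2⟩
  have hneg : ∀ t ∈ Ioc t0 t1, y t < 0 := by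
    intro t ht
    by_contra hc
    push_neg at hc
    exact absurd (le_csSup hbdd ⟨⟨ht0.1.trans ht.1.le, ht.2⟩, hc⟩) (not_le.2 ht.1)
  have ht0lt : t0 < t1 := by
    rcases lt_or_eq_of_le ht0.2 with h | h
    · exact h
    · rw [h] at ht0S; exact absurd ht0S.2 (not_le.2 ht1neg)
  have hyt0le : y t0 ≤ 0 := by
    refine le_of_tendsto (hy.continuousAt.continuousWithinAt (s := Ioi t0)) ?_
    exact Filter.eventually_of_mem (Ioc_mem_nhdsGT_of_mem ⟨le_refl t0, ht0lt⟩)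
      (fun t ht => (hneg t ht).le)
  have hyt0 : y t0 = 0 := le_antisymm hyt0le ht0S.2
  have hsub : Icc t0 t1 ⊆ Icc 0 T := fun x hx => ⟨ht0.1.trans hx.1, hx.2.trans ht1.2⟩
  have hkey : ∀ t ∈ Icc t0 t1, |y t| ≤ M * ∫ s in t0..t, |y s| := by
    intro t ht
    have htT : t ∈ Icc 0 T := hsub ht
    have hyle : y t ≤ 0 := by
      rcases eq_or_lt_of_le ht.1 with h | h
      · rw [← h]; exact hyt0le
      · exact (hneg t ⟨h, ht.2⟩).le
    have heqt : y t = ∫ s in t0..t, g s := by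
      have e1 := heq t htT
      have e2 := heq t0 ht0T
      have : y t - y t0 = (∫ s in (0:ℝ)..t, g s) - ∫ s in (0:ℝ)..t0, g s := by
        rw [e1, e2]; ring
      rw [intervalIntegral.integral_interval_sub_left
        (hInt 0 (left_mem_Icc.2 (ht0T.1.trans ht0T.2)) t htT)
        (hInt 0 (left_mem_Icc.2 (ht0T.1.trans ht0T.2)) t0 ht0T)] at this
      linarith [this, hyt0]
    have hIg : IntervalIntegrable g volume t0 t := hInt t0 ht0T t htT
    have hIy : IntervalIntegrable (fun s => M * |y s|) volume t0 t :=
      (continuous_const.mul hy.abs).intervalIntegrable t0 t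
    have hae : (fun s => -(g s)) ≤ᵐ[volume.restrict (Icc t0 t)] fun s => M * |y s| := by
      have hsub2 : Icc t0 t ⊆ Icc (0:ℝ) T := fun x hx => ⟨ht0T.1.trans hx.1, hx.2.trans htT.2⟩
      exact ae_restrict_of_ae_restrict_of_subset hsub2 hbd
    calc |y t| = -y t := abs_of_nonpos hyle
      _ = ∫ s in t0..t, -(g s) := by rw [intervalIntegral.integral_neg, heqt]
      _ ≤ ∫ s in t0..t, M * |y s| :=
          intervalIntegral.integral_mono_ae_restrict ht.1 hIg.neg hIy hae
      _ = M * ∫ s in t0..t, |y s| := intervalIntegral.integral_const_mul _ _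
  have := gronwall_zero hM hy hkey t1 ⟨ht0lt.le, le_refl t1⟩
  linarith

lemma abs_mul_le' {x y cx cy : ℝ} (hx : |x| ≤ cx) (hy : |y| ≤ cy) : |x * y| ≤ cx * cy := by
  rw [abs_mul]; exact mul_le_mul hx hy (abs_nonneg _) ((abs_nonneg x).trans hx)

lemma intervalIntegrable_of_bdd {g : ℝ → ℝ} {a b D : ℝ}
    (hmeas : Measurable g)
    (hbd : ∀ᵐ s ∂(volume.restrict (Icc a b)), |g s| ≤ D) :
    ∀ c ∈ Icc a b, ∀ d ∈ Icc a b, IntervalIntegrable g volume c d := by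
  have h1 : IntegrableOn g (Icc a b) :=
    Integrable.mono' (integrable_const D) hmeas.aestronglyMeasurable
      (by simpa [Real.norm_eq_abs] using hbd)
  intro c hc d hd
  rw [intervalIntegrable_iff]
  refine h1.mono_set (fun x hx => ?_)
  exact ⟨le_of_lt (lt_of_le_of_lt (le_min hc.1 hd.1) hx.1),
    le_trans hx.2 (max_le hc.2 hd.2)⟩

theorem siri_positive_invariance
    (β βh γ uPmin uVmax T : ℝ)
    (hβ : 0 < β) (hβh : 0 < βh) (hγ : 0 < γ)
    (huPmin0 : 0 < uPmin) (huPmin1 : uPmin ≤ 1)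
    (huVmax0 : 0 ≤ uVmax) (huVmax1 : uVmax < 1)
    (hT : 0 < T)
    (uP uV : ℝ → ℝ)
    (huPmeas : Measurable uP) (huVmeas : Measurable uV)
    (huP : ∀ᵐ t ∂(volume.restrict (Icc (0:ℝ) T)), uP t ∈ Icc uPmin 1)
    (huV : ∀ᵐ t ∂(volume.restrict (Icc (0:ℝ) T)), uV t ∈ Icc (0:ℝ) uVmax)
    (xS xI xR : ℝ → ℝ)
    (hxS : ContinuousOn xS (Icc 0 T)) (hxI : ContinuousOn xI (Icc 0 T))
    (hxR : ContinuousOn xR (Icc 0 T))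
    (heqS : ∀ t ∈ Icc (0:ℝ) T,
      xS t = xS 0 + ∫ s in (0:ℝ)..t, (-(β * xS s * xI s * uP s) - xS s * uV s))
    (heqI : ∀ t ∈ Icc (0:ℝ) T,
      xI t = xI 0 + ∫ s in (0:ℝ)..t,
        (β * xS s * xI s * uP s + βh * xR s * xI s * uP s - γ * xI s))
    (heqR : ∀ t ∈ Icc (0:ℝ) T,
      xR t = xR 0 + ∫ s in (0:ℝ)..t,
        (-(βh * xR s * xI s * uP s) + xS s * uV s + γ * xI s))
    (hS0 : 0 ≤ xS 0) (hI0 : 0 ≤ xI 0) (hR0 : 0 ≤ xR 0)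
    (hsum0 : xS 0 + xI 0 + xR 0 = 1) :
    ∀ t ∈ Icc (0:ℝ) T,
      xS t ∈ Icc (0:ℝ) 1 ∧ xI t ∈ Icc (0:ℝ) 1 ∧ xR t ∈ Icc (0:ℝ) 1 ∧
      xS t + xI t + xR t = 1 := by
  have h0T : (0:ℝ) ∈ Icc (0:ℝ) T := left_mem_Icc.2 hT.le
  -- continuous extensions
  set pj : ℝ → ℝ := fun t => ((projIcc (0:ℝ) T hT.le t : Icc (0:ℝ) T) : ℝ) with hpj
  have hpjc : Continuous pj := continuous_subtype_val.comp (continuous_projIcc)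
  have hpjm : ∀ t, pj t ∈ Icc (0:ℝ) T := fun t => (projIcc (0:ℝ) T hT.le t).2
  have hpjeq : ∀ t ∈ Icc (0:ℝ) T, pj t = t := fun t ht => by
    simp [hpj, projIcc_of_mem hT.le ht]
  set yS : ℝ → ℝ := fun t => xS (pj t) with hyS
  set yI : ℝ → ℝ := fun t => xI (pj t) with hyI
  set yR : ℝ → ℝ := fun t => xR (pj t) with hyR
  have hySc : Continuous yS := hxS.comp_continuous hpjc hpjm
  have hyIc : Continuous yI := hxI.comp_continuous hpjc hpjm
  have hyRc : Continuous yR := hxR.comp_continuous hpjc hpjm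
  have hySx : ∀ t ∈ Icc (0:ℝ) T, yS t = xS t := fun t ht => by rw [hyS]; simp [hpjeq t ht]
  have hyIx : ∀ t ∈ Icc (0:ℝ) T, yI t = xI t := fun t ht => by rw [hyI]; simp [hpjeq t ht]
  have hyRx : ∀ t ∈ Icc (0:ℝ) T, yR t = xR t := fun t ht => by rw [hyR]; simp [hpjeq t ht]
  -- uniform bound C
  obtain ⟨CS, hCS⟩ := isCompact_Icc.exists_bound_of_continuousOn hxS
  obtain ⟨CI, hCI⟩ := isCompact_Icc.exists_bound_of_continuousOn hxI
  obtain ⟨CR, hCR⟩ := isCompact_Icc.exists_bound_of_continuousOn hxR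
  set C : ℝ := max 1 (max CS (max CI CR)) with hCdef
  have hC1 : (1:ℝ) ≤ C := le_max_left _ _
  have hC0 : (0:ℝ) ≤ C := by linarith
  have hbS : ∀ t, |yS t| ≤ C := fun t => le_trans
    (by simpa [Real.norm_eq_abs] using hCS (pj t) (hpjm t))
    (le_trans (le_max_left _ _) (le_max_right _ _))
  have hbI : ∀ t, |yI t| ≤ C := fun t => le_trans
    (by simpa [Real.norm_eq_abs] using hCI (pj t) (hpjm t))
    (le_trans (le_trans (le_max_left _ _) (le_max_right _ _)) (le_max_right _ _))
  have hbR : ∀ t, |yR t| ≤ C := fun t => le_trans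
    (by simpa [Real.norm_eq_abs] using hCR (pj t) (hpjm t))
    (le_trans (le_trans (le_max_right _ _) (le_max_right _ _)) (le_max_right _ _))
  -- integrands
  set fS : ℝ → ℝ := fun s => -(β * yS s * yI s * uP s) - yS s * uV s with hfS
  set fI : ℝ → ℝ := fun s =>
    β * yS s * yI s * uP s + βh * yR s * yI s * uP s - γ * yI s with hfI
  set fR : ℝ → ℝ := fun s => -(βh * yR s * yI s * uP s) + yS s * uV s + γ * yI s with hfR
  have hySm : Measurable yS := hySc.measurable
  have hyIm : Measurable yI := hyIc.measurable
  have hyRm : Measurable yR := hyRc.measurable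
  have hfSm : Measurable fS := by
    apply Measurable.sub
    · exact (((measurable_const.mul hySm).mul hyIm).mul huPmeas).neg
    · exact hySm.mul huVmeas
  have hfIm : Measurable fI := by
    apply Measurable.sub
    · exact ((((measurable_const.mul hySm).mul hyIm).mul huPmeas).add
        (((measurable_const.mul hyRm).mul hyIm).mul huPmeas))
    · exact measurable_const.mul hyIm
  have hfRm : Measurable fR := by
    apply Measurable.add
    · exact ((((measurable_const.mul hyRm).mul hyIm).mul huPmeas).neg).add
        (hySm.mul huVmeas)
    · exact measurable_const.mul hyIm
  -- a.e. absolute bounds for the integrands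
  have hβa : |β| ≤ β := le_of_eq (abs_of_pos hβ)
  have hβha : |βh| ≤ βh := le_of_eq (abs_of_pos hβh)
  have hγa : |γ| ≤ γ := le_of_eq (abs_of_pos hγ)
  have hbdS : ∀ᵐ s ∂(volume.restrict (Icc (0:ℝ) T)), |fS s| ≤ β * C * C + C * uVmax := by
    filter_upwards [huP, huV] with s hP hV
    have hPa : |uP s| ≤ 1 := abs_le.2 ⟨by linarith [hP.1], hP.2⟩
    have hVa : |uV s| ≤ uVmax := abs_le.2 ⟨by linarith [hV.1], hV.2⟩
    have h1 : |β * yS s * yI s * uP s| ≤ β * C * C * 1 :=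
      abs_mul_le' (abs_mul_le' (abs_mul_le' hβa (hbS s)) (hbI s)) hPa
    have h2 : |yS s * uV s| ≤ C * uVmax := abs_mul_le' (hbS s) hVa
    calc |fS s| = |(-(β * yS s * yI s * uP s)) + (-(yS s * uV s))| := by
          rw [hfS]; ring_nf
      _ ≤ |(-(β * yS s * yI s * uP s))| + |(-(yS s * uV s))| := abs_add_le _ _
      _ = |β * yS s * yI s * uP s| + |yS s * uV s| := by rw [abs_neg, abs_neg]
      _ ≤ β * C * C * 1 + C * uVmax := add_le_add h1 h2
      _ = β * C * C + C * uVmax := by ring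
  have hbdI : ∀ᵐ s ∂(volume.restrict (Icc (0:ℝ) T)),
      |fI s| ≤ β * C * C + βh * C * C + γ * C := by
    filter_upwards [huP] with s hP
    have hPa : |uP s| ≤ 1 := abs_le.2 ⟨by linarith [hP.1], hP.2⟩
    have h1 : |β * yS s * yI s * uP s| ≤ β * C * C * 1 :=
      abs_mul_le' (abs_mul_le' (abs_mul_le' hβa (hbS s)) (hbI s)) hPa
    have h2 : |βh * yR s * yI s * uP s| ≤ βh * C * C * 1 :=
      abs_mul_le' (abs_mul_le' (abs_mul_le' hβha (hbR s)) (hbI s)) hPa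
    have h3 : |γ * yI s| ≤ γ * C := abs_mul_le' hγa (hbI s)
    calc |fI s| = |(β * yS s * yI s * uP s + βh * yR s * yI s * uP s) + (-(γ * yI s))| := by
          rw [hfI]; ring_nf
      _ ≤ |β * yS s * yI s * uP s + βh * yR s * yI s * uP s| + |(-(γ * yI s))| := abs_add_le _ _
      _ ≤ |β * yS s * yI s * uP s| + |βh * yR s * yI s * uP s| + |γ * yI s| := by
          rw [abs_neg]; exact add_le_add_left (abs_add_le _ _) _
      _ ≤ β * C * C * 1 + βh * C * C * 1 + γ * C := by
          exact add_le_add (add_le_add h1 h2) h3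
      _ = β * C * C + βh * C * C + γ * C := by ring
  have hbdR : ∀ᵐ s ∂(volume.restrict (Icc (0:ℝ) T)),
      |fR s| ≤ βh * C * C + C * uVmax + γ * C := by
    filter_upwards [huP, huV] with s hP hV
    have hPa : |uP s| ≤ 1 := abs_le.2 ⟨by linarith [hP.1], hP.2⟩
    have hVa : |uV s| ≤ uVmax := abs_le.2 ⟨by linarith [hV.1], hV.2⟩
    have h1 : |βh * yR s * yI s * uP s| ≤ βh * C * C * 1 :=
      abs_mul_le' (abs_mul_le' (abs_mul_le' hβha (hbR s)) (hbI s)) hPa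
    have h2 : |yS s * uV s| ≤ C * uVmax := abs_mul_le' (hbS s) hVa
    have h3 : |γ * yI s| ≤ γ * C := abs_mul_le' hγa (hbI s)
    calc |fR s| = |(-(βh * yR s * yI s * uP s)) + yS s * uV s + γ * yI s| := by rw [hfR]
      _ ≤ |(-(βh * yR s * yI s * uP s)) + yS s * uV s| + |γ * yI s| := abs_add_le _ _
      _ ≤ |(-(βh * yR s * yI s * uP s))| + |yS s * uV s| + |γ * yI s| := by
          exact add_le_add_left (abs_add_le _ _) _
      _ = |βh * yR s * yI s * uP s| + |yS s * uV s| + |γ * yI s| := by rw [abs_neg]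
      _ ≤ βh * C * C * 1 + C * uVmax + γ * C := add_le_add (add_le_add h1 h2) h3
      _ = βh * C * C + C * uVmax + γ * C := by ring
  -- interval integrability
  have hIntS := intervalIntegrable_of_bdd hfSm hbdS
  have hIntI := intervalIntegrable_of_bdd hfIm hbdI
  have hIntR := intervalIntegrable_of_bdd hfRm hbdR
  -- transfer the integral equations to y
  have heqS' : ∀ t ∈ Icc (0:ℝ) T, yS t = yS 0 + ∫ s in (0:ℝ)..t, fS s := by
    intro t ht
    rw [hySx t ht, hySx 0 h0T, heqS t ht]
    congr 1
    refine intervalIntegral.integral_congr fun s hs => ?_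
    rw [uIcc_of_le ht.1] at hs
    have hsT : s ∈ Icc (0:ℝ) T := ⟨hs.1, hs.2.trans ht.2⟩
    simp only [hfS]
    rw [hySx s hsT, hyIx s hsT]
  have heqI' : ∀ t ∈ Icc (0:ℝ) T, yI t = yI 0 + ∫ s in (0:ℝ)..t, fI s := by
    intro t ht
    rw [hyIx t ht, hyIx 0 h0T, heqI t ht]
    congr 1
    refine intervalIntegral.integral_congr fun s hs => ?_
    rw [uIcc_of_le ht.1] at hs
    have hsT : s ∈ Icc (0:ℝ) T := ⟨hs.1, hs.2.trans ht.2⟩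
    simp only [hfI]
    rw [hySx s hsT, hyIx s hsT, hyRx s hsT]
  have heqR' : ∀ t ∈ Icc (0:ℝ) T, yR t = yR 0 + ∫ s in (0:ℝ)..t, fR s := by
    intro t ht
    rw [hyRx t ht, hyRx 0 h0T, heqR t ht]
    congr 1
    refine intervalIntegral.integral_congr fun s hs => ?_
    rw [uIcc_of_le ht.1] at hs
    have hsT : s ∈ Icc (0:ℝ) T := ⟨hs.1, hs.2.trans ht.2⟩
    simp only [hfR]
    rw [hySx s hsT, hyIx s hsT, hyRx s hsT]
  -- nonnegativity of yS
  have hMS : (0:ℝ) ≤ β * C + uVmax := by positivity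
  have hbdS' : ∀ᵐ s ∂(volume.restrict (Icc (0:ℝ) T)),
      -(fS s) ≤ (β * C + uVmax) * |yS s| := by
    filter_upwards [huP, huV] with s hP hV
    have hPa : |uP s| ≤ 1 := abs_le.2 ⟨by linarith [hP.1], hP.2⟩
    have hVa : |uV s| ≤ uVmax := abs_le.2 ⟨by linarith [hV.1], hV.2⟩
    have hc : |β * yI s * uP s + uV s| ≤ β * C + uVmax := by
      calc |β * yI s * uP s + uV s| ≤ |β * yI s * uP s| + |uV s| := abs_add_le _ _
        _ ≤ β * C * 1 + uVmax :=
            add_le_add (abs_mul_le' (abs_mul_le' hβa (hbI s)) hPa) hVa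
        _ = β * C + uVmax := by ring
    calc -(fS s) = yS s * (β * yI s * uP s + uV s) := by rw [hfS]; ring
      _ ≤ |yS s * (β * yI s * uP s + uV s)| := le_abs_self _
      _ = |yS s| * |β * yI s * uP s + uV s| := abs_mul _ _
      _ ≤ |yS s| * (β * C + uVmax) := by
          exact mul_le_mul_of_nonneg_left hc (abs_nonneg _)
      _ = (β * C + uVmax) * |yS s| := mul_comm _ _
  have hyS0 : 0 ≤ yS 0 := by rw [hySx 0 h0T]; exact hS0
  have hySnn : ∀ t ∈ Icc (0:ℝ) T, 0 ≤ yS t :=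
    nonneg_aux hMS hySc hyS0 hIntS hbdS' heqS'
  -- nonnegativity of yI
  have hMI : (0:ℝ) ≤ β * C + βh * C + γ := by positivity
  have hbdI' : ∀ᵐ s ∂(volume.restrict (Icc (0:ℝ) T)),
      -(fI s) ≤ (β * C + βh * C + γ) * |yI s| := by
    filter_upwards [huP] with s hP
    have hPa : |uP s| ≤ 1 := abs_le.2 ⟨by linarith [hP.1], hP.2⟩
    have hc : |γ - β * yS s * uP s - βh * yR s * uP s| ≤ β * C + βh * C + γ := by
      calc |γ - β * yS s * uP s - βh * yR s * uP s|
          = |γ + (-(β * yS s * uP s)) + (-(βh * yR s * uP s))| := by ring_nf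
        _ ≤ |γ + (-(β * yS s * uP s))| + |(-(βh * yR s * uP s))| := abs_add_le _ _
        _ ≤ |γ| + |(-(β * yS s * uP s))| + |(-(βh * yR s * uP s))| :=
            add_le_add_left (abs_add_le _ _) _
        _ = |γ| + |β * yS s * uP s| + |βh * yR s * uP s| := by rw [abs_neg, abs_neg]
        _ ≤ γ + β * C * 1 + βh * C * 1 :=
            add_le_add (add_le_add hγa (abs_mul_le' (abs_mul_le' hβa (hbS s)) hPa))
              (abs_mul_le' (abs_mul_le' hβha (hbR s)) hPa)
        _ = β * C + βh * C + γ := by ring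
    calc -(fI s) = yI s * (γ - β * yS s * uP s - βh * yR s * uP s) := by rw [hfI]; ring
      _ ≤ |yI s * (γ - β * yS s * uP s - βh * yR s * uP s)| := le_abs_self _
      _ = |yI s| * |γ - β * yS s * uP s - βh * yR s * uP s| := abs_mul _ _
      _ ≤ |yI s| * (β * C + βh * C + γ) := mul_le_mul_of_nonneg_left hc (abs_nonneg _)
      _ = (β * C + βh * C + γ) * |yI s| := mul_comm _ _
  have hyI0 : 0 ≤ yI 0 := by rw [hyIx 0 h0T]; exact hI0
  have hyInn : ∀ t ∈ Icc (0:ℝ) T, 0 ≤ yI t :=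
    nonneg_aux hMI hyIc hyI0 hIntI hbdI' heqI'
  -- nonnegativity of yR
  have hMR : (0:ℝ) ≤ βh * C := by positivity
  have hbdR' : ∀ᵐ s ∂(volume.restrict (Icc (0:ℝ) T)),
      -(fR s) ≤ (βh * C) * |yR s| := by
    filter_upwards [huP, huV, ae_restrict_mem measurableSet_Icc] with s hP hV hs
    have hPa : |uP s| ≤ 1 := abs_le.2 ⟨by linarith [hP.1], hP.2⟩
    have h2 : 0 ≤ yS s * uV s := mul_nonneg (hySnn s hs) hV.1
    have h3 : 0 ≤ γ * yI s := mul_nonneg hγ.le (hyInn s hs)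
    have h1 : βh * yR s * yI s * uP s ≤ (βh * C) * |yR s| := by
      calc βh * yR s * yI s * uP s ≤ |βh * yR s * yI s * uP s| := le_abs_self _
        _ = |βh * yI s * uP s| * |yR s| := by rw [← abs_mul]; ring_nf
        _ ≤ (βh * C * 1) * |yR s| := by
            exact mul_le_mul_of_nonneg_right
              (abs_mul_le' (abs_mul_le' hβha (hbI s)) hPa) (abs_nonneg _)
        _ = (βh * C) * |yR s| := by ring
    calc -(fR s) = βh * yR s * yI s * uP s - yS s * uV s - γ * yI s := by rw [hfR]; ring
      _ ≤ βh * yR s * yI s * uP s := by linarith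
      _ ≤ (βh * C) * |yR s| := h1
  have hyR0 : 0 ≤ yR 0 := by rw [hyRx 0 h0T]; exact hR0
  have hyRnn : ∀ t ∈ Icc (0:ℝ) T, 0 ≤ yR t :=
    nonneg_aux hMR hyRc hyR0 hIntR hbdR' heqR'
  -- sum identity
  have hsum : ∀ t ∈ Icc (0:ℝ) T, yS t + yI t + yR t = 1 := by
    intro t ht
    have e1 : (∫ s in (0:ℝ)..t, fS s) + (∫ s in (0:ℝ)..t, fI s) + (∫ s in (0:ℝ)..t, fR s)
        = ∫ s in (0:ℝ)..t, (fS s + fI s + fR s) := by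
      rw [← intervalIntegral.integral_add (hIntS 0 h0T t ht) (hIntI 0 h0T t ht),
        ← intervalIntegral.integral_add ((hIntS 0 h0T t ht).add (hIntI 0 h0T t ht))
        (hIntR 0 h0T t ht)]
    have e2 : (∫ s in (0:ℝ)..t, (fS s + fI s + fR s)) = 0 := by
      have hz : EqOn (fun s => fS s + fI s + fR s) (fun _ => (0:ℝ)) (uIcc 0 t) :=
        fun s _ => by simp only [hfS, hfI, hfR]; ring
      rw [intervalIntegral.integral_congr hz]
      simp
    have := heqS' t ht
    have := heqI' t ht
    have := heqR' t ht
    have hs0 : yS 0 + yI 0 + yR 0 = 1 := by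
      rw [hySx 0 h0T, hyIx 0 h0T, hyRx 0 h0T]; exact hsum0
    rw [e2] at e1
    linarith
  -- conclude
  intro t ht
  have h1 := hySnn t ht
  have h2 := hyInn t ht
  have h3 := hyRnn t ht
  have h4 := hsum t ht
  rw [hySx t ht] at h1
  rw [hyIx t ht] at h2
  rw [hyRx t ht] at h3
  rw [hySx t ht, hyIx t ht, hyRx t ht] at h4
  exact ⟨⟨h1, by linarith⟩, ⟨h2, by linarith⟩, ⟨h3, by linarith⟩, h4⟩
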